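/- Let p and q be distinct primes with q ≡ 3 (mod 8), and let r be an integer with q dividing r² + p. Let R = R(q,r) in B = ℍ(−p, −q), let L_E be the Gross lattice of R, and let R⁰ = {x ∈ R : tr(x) = 0}. Then there exist integers b, c, f, a ℤ-lattice L with L_E ⊆ L ⊆ R⁰, and elements v₁, v₂, v₃ generating L over ℤ such that for all integers x, y, z, the reduced norm of x·v₁ + y·v₂ + z·v₃ equals p·x² + b·y² + f·y·z + c·z². -/

import Mathlib

open Quaternion

/-- The reduced trace of a quaternion: `tr v = v + star v` (as a scalar). -/
def trd {c₁ c₂ : ℚ} (v : ℍ[ℚ, c₁, c₂]) : ℚ := (v + star v).re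

/-- The reduced norm of a quaternion: `nrd v = v * star v` (as a scalar). -/
def nrd {c₁ c₂ : ℚ} (v : ℍ[ℚ, c₁, c₂]) : ℚ := (v * star v).re

/-- `α` in `B = ℍ(-p, -q)`, with `α² = -p`. -/
def qa (p q : ℕ) : ℍ[ℚ, -(p : ℚ), -(q : ℚ)] := ⟨0, 1, 0, 0⟩

/-- `β` in `B = ℍ(-p, -q)`, with `β² = -q`. -/
def qb (p q : ℕ) : ℍ[ℚ, -(p : ℚ), -(q : ℚ)] := ⟨0, 0, 1, 0⟩

/-- The ℤ-lattice `R(q,r)` spanned by `1, (1+β)/2, α(1+β)/2, (r+α)β/q`. -/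
def Rqr (p q : ℕ) (r : ℤ) : Submodule ℤ ℍ[ℚ, -(p : ℚ), -(q : ℚ)] :=
  Submodule.span ℤ
    ({1, ((2 : ℚ)⁻¹) • (1 + qb p q), ((2 : ℚ)⁻¹) • (qa p q * (1 + qb p q)),
      ((q : ℚ)⁻¹) • (((r : ℚ) • (1 : ℍ[ℚ, -(p : ℚ), -(q : ℚ)]) + qa p q) * qb p q)} :
      Set ℍ[ℚ, -(p : ℚ), -(q : ℚ)])

/-- The Gross lattice `{x ∈ ℤ + 2R : tr(x) = 0}` of a ℤ-lattice `R` in `ℍ(-p,-q)`. -/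
def GrossLattice (p q : ℕ) (R : Submodule ℤ ℍ[ℚ, -(p : ℚ), -(q : ℚ)]) :
    Set ℍ[ℚ, -(p : ℚ), -(q : ℚ)] :=
  {v | (∃ n : ℤ, ∃ u ∈ R, v = (n : ℍ[ℚ, -(p : ℚ), -(q : ℚ)]) + 2 • u) ∧ trd v = 0}

lemma zsmulQ {c₁ c₂ : ℚ} (n : ℤ) (x : ℍ[ℚ, c₁, c₂]) : n • x = (n : ℚ) • x :=
  (Int.cast_smul_eq_zsmul ℚ n x).symm

lemma trd_eq {c₁ c₂ : ℚ} (v : ℍ[ℚ, c₁, c₂]) : trd v = 2 * v.re := by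
  simp [trd]; ring

def Tl (c₁ c₂ : ℚ) : ℍ[ℚ, c₁, c₂] →ₗ[ℤ] ℚ where
  toFun v := trd v
  map_add' a b := by simp [trd_eq]; ring
  map_smul' n a := by
    simp [trd_eq, QuaternionAlgebra.re_smul, zsmul_eq_mul]; ring

theorem intermediate_lattice_Rqr (p q : ℕ) (hp : p.Prime) (hq : q.Prime) (hpq : p ≠ q)
    (hq8 : q % 8 = 3) (r : ℤ) (hdvd : (q : ℤ) ∣ r ^ 2 + (p : ℤ)) :
    ∃ (b c f : ℤ) (L : Submodule ℤ ℍ[ℚ, -(p : ℚ), -(q : ℚ)])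
      (v₁ v₂ v₃ : ℍ[ℚ, -(p : ℚ), -(q : ℚ)]),
      GrossLattice p q (Rqr p q r) ⊆ (L : Set ℍ[ℚ, -(p : ℚ), -(q : ℚ)]) ∧
      (L : Set ℍ[ℚ, -(p : ℚ), -(q : ℚ)]) ⊆ {v | v ∈ Rqr p q r ∧ trd v = 0} ∧
      L = Submodule.span ℤ ({v₁, v₂, v₃} : Set ℍ[ℚ, -(p : ℚ), -(q : ℚ)]) ∧
      ∀ x y z : ℤ,
        nrd (x • v₁ + y • v₂ + z • v₃) =
          (p : ℚ) * (x : ℚ) ^ 2 + (b : ℚ) * (y : ℚ) ^ 2 + (f : ℚ) * (y : ℚ) * (z : ℚ) +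
            (c : ℚ) * (z : ℚ) ^ 2 := by
  have hq0 : (q : ℚ) ≠ 0 := Nat.cast_ne_zero.mpr hq.ne_zero
  obtain ⟨c, hc⟩ := hdvd
  have hcQ : (r : ℚ) ^ 2 + (p : ℚ) = (q : ℚ) * (c : ℚ) := by exact_mod_cast congrArg (Int.cast : ℤ → ℚ) hc
  set v₁ : ℍ[ℚ, -(p : ℚ), -(q : ℚ)] := qa p q with hv₁def
  set v₂ : ℍ[ℚ, -(p : ℚ), -(q : ℚ)] := qb p q with hv₂def
  set v₃ : ℍ[ℚ, -(p : ℚ), -(q : ℚ)] :=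
    ((q : ℚ)⁻¹) • (((r : ℚ) • (1 : ℍ[ℚ, -(p : ℚ), -(q : ℚ)]) + qa p q) * qb p q) with hv₃def
  -- generators of Rqr
  set e₁ : ℍ[ℚ, -(p : ℚ), -(q : ℚ)] := ((2 : ℚ)⁻¹) • (1 + qb p q) with he₁def
  set e₂ : ℍ[ℚ, -(p : ℚ), -(q : ℚ)] := ((2 : ℚ)⁻¹) • (qa p q * (1 + qb p q)) with he₂def
  have he₀ : (1 : ℍ[ℚ, -(p : ℚ), -(q : ℚ)]) ∈ Rqr p q r := Submodule.subset_span (by left; rfl)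
  have he₁ : e₁ ∈ Rqr p q r := Submodule.subset_span (by right; left; rfl)
  have he₂ : e₂ ∈ Rqr p q r := Submodule.subset_span (by right; right; left; rfl)
  have he₃ : v₃ ∈ Rqr p q r := Submodule.subset_span (by right; right; right; rfl)
  -- memberships of v₁ v₂ in Rqr
  have hv₂R : v₂ ∈ Rqr p q r := by
    have h : v₂ = (2 : ℤ) • e₁ - 1 := by
      rw [zsmulQ]
      simp [hv₂def, he₁def, qb, QuaternionAlgebra.ext_iff]
    rw [h]
    exact sub_mem (Submodule.smul_mem _ _ he₁) he₀
  have hv₁R : v₁ ∈ Rqr p q r := by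
    have h : v₁ = (2 * r) • e₁ + (-r) • (1 : ℍ[ℚ, -(p : ℚ), -(q : ℚ)]) + (2 : ℤ) • e₂ + (-(q : ℤ)) • v₃ := by
      rw [zsmulQ, zsmulQ, zsmulQ, zsmulQ]
      simp [hv₁def, hv₃def, he₁def, he₂def, qa, qb, QuaternionAlgebra.ext_iff]
      field_simp
      norm_num
    rw [h]
    exact add_mem (add_mem (add_mem (Submodule.smul_mem _ _ he₁) (Submodule.smul_mem _ _ he₀))
      (Submodule.smul_mem _ _ he₂)) (Submodule.smul_mem _ _ he₃)
  -- trace zero of generators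
  have htr1 : trd v₁ = 0 := by simp [trd_eq, hv₁def, qa]
  have htr2 : trd v₂ = 0 := by simp [trd_eq, hv₂def, qb]
  have htr3 : trd v₃ = 0 := by
    simp [trd_eq, hv₃def, qa, qb, QuaternionAlgebra.re_smul]
  set L : Submodule ℤ ℍ[ℚ, -(p : ℚ), -(q : ℚ)] :=
    Submodule.span ℤ ({v₁, v₂, v₃} : Set ℍ[ℚ, -(p : ℚ), -(q : ℚ)]) with hLdef
  have hLker : L ≤ LinearMap.ker (Tl (-(p : ℚ)) (-(q : ℚ))) := by
    rw [hLdef, Submodule.span_le]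
    rintro s (rfl | rfl | rfl) <;>
      simpa [Tl, LinearMap.mem_ker] using (by assumption : trd _ = 0)
  have hLR : L ≤ Rqr p q r := by
    rw [hLdef, Submodule.span_le]
    rintro s (rfl | rfl | rfl)
    exacts [hv₁R, hv₂R, he₃]
  refine ⟨q, c, 2 * r, L, v₁, v₂, v₃, ?_, ?_, rfl, ?_⟩
  · -- Gross lattice ⊆ L
    rintro v ⟨⟨n, u, hu, rfl⟩, htr⟩
    set M : Submodule ℤ ℍ[ℚ, -(p : ℚ), -(q : ℚ)] :=
      Submodule.span ℤ (insert 1 ({v₁, v₂, v₃} : Set ℍ[ℚ, -(p : ℚ), -(q : ℚ)])) with hMdef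
    have h1M : (1 : ℍ[ℚ, -(p : ℚ), -(q : ℚ)]) ∈ M := Submodule.subset_span (by left; rfl)
    have hv₁M : v₁ ∈ M := Submodule.subset_span (by right; left; rfl)
    have hv₂M : v₂ ∈ M := Submodule.subset_span (by right; right; left; rfl)
    have hv₃M : v₃ ∈ M := Submodule.subset_span (by right; right; right; rfl)
    have h2u : (2 : ℤ) • u ∈ M := by
      have hle : Rqr p q r ≤
          Submodule.comap ((2 : ℤ) • (LinearMap.id : ℍ[ℚ, -(p : ℚ), -(q : ℚ)] →ₗ[ℤ] _)) M := by
        rw [Rqr, Submodule.span_le]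
        rintro s (rfl | rfl | rfl | rfl) <;>
          simp only [SetLike.mem_coe, Submodule.mem_comap, LinearMap.smul_apply,
            LinearMap.id_apply]
        · exact Submodule.smul_mem _ _ h1M
        · have h : (2 : ℤ) • e₁ = 1 + v₂ := by
            rw [zsmulQ]
            simp [he₁def, hv₂def, qb, QuaternionAlgebra.ext_iff]
          rw [← he₁def, h]; exact add_mem h1M hv₂M
        · have h : (2 : ℤ) • e₂ = v₁ + (-r) • v₂ + (q : ℤ) • v₃ := by
            rw [zsmulQ, zsmulQ, zsmulQ]
            simp [he₂def, hv₁def, hv₂def, hv₃def, qa, qb, QuaternionAlgebra.ext_iff]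
            field_simp
            norm_num
          rw [← he₂def, h]
          exact add_mem (add_mem hv₁M (Submodule.smul_mem _ _ hv₂M)) (Submodule.smul_mem _ _ hv₃M)
        · rw [← hv₃def]; exact Submodule.smul_mem _ _ hv₃M
      simpa using hle hu
    have hvM : (n : ℍ[ℚ, -(p : ℚ), -(q : ℚ)]) + 2 • u ∈ M := by
      have h2 : (2 : ℕ) • u = (2 : ℤ) • u := by simp [two_smul, two_zsmul]
      rw [h2]
      refine add_mem ?_ h2u
      have : (n : ℍ[ℚ, -(p : ℚ), -(q : ℚ)]) = n • (1 : ℍ[ℚ, -(p : ℚ), -(q : ℚ)]) := by simp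
      rw [this]; exact Submodule.smul_mem _ _ h1M
    have hsup : M = Submodule.span ℤ ({(1 : ℍ[ℚ, -(p : ℚ), -(q : ℚ)])} : Set _) ⊔ L := by
      rw [hMdef, Set.insert_eq, Submodule.span_union, hLdef]
    rw [hsup] at hvM
    obtain ⟨y, hy, z, hz, hyz⟩ := Submodule.mem_sup.mp hvM
    obtain ⟨m, rfl⟩ := Submodule.mem_span_singleton.mp hy
    have hz0 : trd z = 0 := by
      have := hLker hz
      simpa [Tl, LinearMap.mem_ker] using this
    have hm : (m : ℚ) = 0 := by
      have h := htr
      rw [← hyz] at h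
      rw [trd_eq] at h hz0
      simp only [QuaternionAlgebra.re_add, QuaternionAlgebra.re_smul,
        QuaternionAlgebra.re_one] at h
      have : z.re = 0 := by linarith
      rw [this] at h
      simp [zsmul_eq_mul] at h
      exact_mod_cast h
    have : m • (1 : ℍ[ℚ, -(p : ℚ), -(q : ℚ)]) = 0 := by
      have : m = 0 := by exact_mod_cast hm
      simp [this]
    rw [← hyz, this, zero_add]
    exact hz
  · -- L ⊆ R⁰
    intro v hv
    refine ⟨hLR hv, ?_⟩
    have := hLker hv
    simpa [Tl, LinearMap.mem_ker] using this
  · -- norm form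
    intro x y z
    have hx : (x : ℤ) • v₁ = (x : ℚ) • v₁ := (Int.cast_smul_eq_zsmul ℚ x v₁).symm
    have hy : (y : ℤ) • v₂ = (y : ℚ) • v₂ := (Int.cast_smul_eq_zsmul ℚ y v₂).symm
    have hz : (z : ℤ) • v₃ = (z : ℚ) • v₃ := (Int.cast_smul_eq_zsmul ℚ z v₃).symm
    rw [hx, hy, hz]
    simp only [nrd, hv₁def, hv₂def, hv₃def, qa, qb]
    simp [QuaternionAlgebra.re_mul, QuaternionAlgebra.re_smul, QuaternionAlgebra.ext_iff,
      smul_eq_mul]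
    field_simp
    linear_combination (z : ℚ) ^ 2 * hcQ
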